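/- Let π : ℕ → (0, ∞) satisfy the quasi-multiplicativity bounds D₄ π(n₀|n₂) ≤ π(n₀|n₁)·π(n₁|n₂) ≤ D₅ π(n₀|n₂) for all n₀ < n₁ < n₂ (where π(n|N) denotes a two-point scale quantity) together with D₂ (n/N)^{1/2} ≤ π(n|N). Then there is a constant C₆ such that for all k, ∑_{j=0}^{k} 2^{2j} π(1|2^j) π(1|2^k) ≤ C₆ [2^k π(1|2^k)]². -/
import Mathlib


open Finset

/-- Key summation in the variance bound: quasi-multiplicativity together with
the RSW bound D₂(n/N)^{1/2} ≤ π(n|N) gives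
∑_{j≤k} 2^{2j} π(1|2^j) π(1|2^k) ≤ C₆ [2^k π(1|2^k)]². -/
theorem stmt_8 (D₂ D₄ D₅ : ℝ) (hD₂ : 0 < D₂) (hD₄ : 0 < D₄) (hD₅ : 0 < D₅)
    (π : ℕ → ℕ → ℝ) (hπpos : ∀ n N, 0 < π n N)
    (hqm : ∀ n₀ n₁ n₂ : ℕ, n₀ < n₁ → n₁ < n₂ →
      D₄ * π n₀ n₂ ≤ π n₀ n₁ * π n₁ n₂ ∧ π n₀ n₁ * π n₁ n₂ ≤ D₅ * π n₀ n₂)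
    (hRSW : ∀ n N : ℕ, 1 ≤ n → n ≤ N →
      D₂ * ((n : ℝ) / (N : ℝ)) ^ ((1 : ℝ) / 2) ≤ π n N) :
    ∃ C₆ : ℝ, 0 < C₆ ∧ ∀ k : ℕ,
      ∑ j ∈ range (k + 1), (2 : ℝ) ^ (2 * j) * π 1 (2 ^ j) * π 1 (2 ^ k)
        ≤ C₆ * ((2 : ℝ) ^ k * π 1 (2 ^ k)) ^ 2 := by
  have hπ11 := hπpos 1 1
  set C' : ℝ := 1 + D₅ / D₂ + π 1 1 / D₂ with hC'
  have hC'pos : 0 < C' := by rw [hC']; nlinarith [div_pos hD₅ hD₂, div_pos hπ11 hD₂]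
  -- RSW weakened to a linear bound
  have hRSW' : ∀ n N : ℕ, 1 ≤ n → n ≤ N → D₂ * ((n : ℝ) / (N : ℝ)) ≤ π n N := by
    intro n N hn hnN
    refine le_trans ?_ (hRSW n N hn hnN)
    have hN : (0:ℝ) < N := by exact_mod_cast Nat.lt_of_lt_of_le Nat.zero_lt_one (hn.trans hnN)
    have hx0 : (0:ℝ) < (n:ℝ) / N := div_pos (by exact_mod_cast hn) hN
    have hx1 : (n:ℝ) / N ≤ 1 := by
      rw [div_le_one hN]; exact_mod_cast hnN
    have := Real.rpow_le_rpow_of_exponent_ge hx0 hx1 (by norm_num : (1:ℝ)/2 ≤ 1)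
    rw [Real.rpow_one] at this
    exact mul_le_mul_of_nonneg_left this hD₂.le
  refine ⟨2 * C', by positivity, fun k => ?_⟩
  have hPk : 0 < π 1 (2 ^ k) := hπpos _ _
  have key : ∀ j ∈ range (k+1),
      (2:ℝ)^(2*j) * π 1 (2^j) * π 1 (2^k)
        ≤ C' * ((2:ℝ)^j * (2:ℝ)^k) * (π 1 (2^k))^2 := by
    intro j hj
    rw [mem_range, Nat.lt_succ_iff] at hj
    have hPj : 0 < π 1 (2^j) := hπpos _ _
    have h2j : (0:ℝ) < 2^j := by positivity
    have h2k : (0:ℝ) < 2^k := by positivity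
    have hcore : (2:ℝ)^j * π 1 (2^j) ≤ C' * ((2:ℝ)^k * π 1 (2^k)) := by
      rcases eq_or_lt_of_le hj with rfl | hjk
      · -- j = k
        have h1C : (1:ℝ) ≤ C' := by
          rw [hC']; nlinarith [div_pos hD₅ hD₂, div_pos hπ11 hD₂]
        nlinarith [mul_pos h2j hPj]
      · rcases Nat.eq_zero_or_pos j with rfl | hj1
        · -- j = 0
          have h1k : (1:ℕ) ≤ 2^k := Nat.one_le_two_pow
          have hr := hRSW' 1 (2^k) le_rfl h1k
          have hcast : ((2^k : ℕ) : ℝ) = (2:ℝ)^k := by push_cast; ring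
          rw [hcast] at hr
          push_cast at hr
          -- D₂ / 2^k ≤ π 1 (2^k)  ⇒  D₂ ≤ 2^k π 1 (2^k)
          have hD2le : D₂ ≤ (2:ℝ)^k * π 1 (2^k) := by
            have := mul_le_mul_of_nonneg_left hr h2k.le
            calc D₂ = (2:ℝ)^k * (D₂ * ((1:ℝ)/2^k)) := by field_simp
              _ ≤ (2:ℝ)^k * π 1 (2^k) := this
          have : π 1 1 ≤ (π 1 1 / D₂) * ((2:ℝ)^k * π 1 (2^k)) := by
            rw [div_mul_eq_mul_div, le_div_iff₀ hD₂]
            calc π 1 1 * D₂ ≤ π 1 1 * ((2:ℝ)^k * π 1 (2^k)) :=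
                  mul_le_mul_of_nonneg_left hD2le hπ11.le
              _ = π 1 1 * ((2:ℝ)^k * π 1 (2^k)) := rfl
          simp only [pow_zero, one_mul]
          refine this.trans ?_
          have : (π 1 1 / D₂) ≤ C' := by
            rw [hC']
            nlinarith [div_pos hD₅ hD₂]
          exact mul_le_mul_of_nonneg_right this (by positivity)
        · -- 0 < j < k
          have h1j : (1:ℕ) < 2^j := Nat.one_lt_two_pow_iff.mpr hj1.ne'
          have hjk2 : (2:ℕ)^j < 2^k := Nat.pow_lt_pow_right (by norm_num) hjk
          have hqm' := (hqm 1 (2^j) (2^k) h1j hjk2).2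
          have hr := hRSW' (2^j) (2^k) (Nat.one_le_two_pow) hjk2.le
          have hcastj : ((2^j : ℕ) : ℝ) = (2:ℝ)^j := by push_cast; ring
          have hcastk : ((2^k : ℕ) : ℝ) = (2:ℝ)^k := by push_cast; ring
          rw [hcastj, hcastk] at hr
          have hPjk : 0 < π (2^j) (2^k) := hπpos _ _
          -- D₂ * 2^j / 2^k ≤ π(2^j,2^k); π_j * π_jk ≤ D₅ π_k
          have step : D₂ * ((2:ℝ)^j * π 1 (2^j)) ≤ D₅ * ((2:ℝ)^k * π 1 (2^k)) := by
            have h1 : D₂ * (2:ℝ)^j ≤ π (2^j) (2^k) * (2:ℝ)^k := by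
              rw [← div_le_iff₀ h2k]
              calc D₂ * (2:ℝ)^j / 2^k = D₂ * ((2:ℝ)^j / 2^k) := by ring
                _ ≤ _ := hr
            nlinarith [mul_le_mul_of_nonneg_left h1 hPj.le,
              mul_le_mul_of_nonneg_left hqm' h2k.le]
          have : (2:ℝ)^j * π 1 (2^j) ≤ (D₅ / D₂) * ((2:ℝ)^k * π 1 (2^k)) := by
            rw [div_mul_eq_mul_div, le_div_iff₀ hD₂]
            nlinarith [step]
          refine this.trans ?_
          have hle : D₅ / D₂ ≤ C' := by
            rw [hC']; nlinarith [div_pos hπ11 hD₂]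
          exact mul_le_mul_of_nonneg_right hle (by positivity)
    calc (2:ℝ)^(2*j) * π 1 (2^j) * π 1 (2^k)
        = ((2:ℝ)^j * π 1 (2^j)) * ((2:ℝ)^j * π 1 (2^k)) := by
          rw [two_mul, pow_add]; ring
      _ ≤ (C' * ((2:ℝ)^k * π 1 (2^k))) * ((2:ℝ)^j * π 1 (2^k)) :=
          mul_le_mul_of_nonneg_right hcore (by positivity)
      _ = C' * ((2:ℝ)^j * (2:ℝ)^k) * (π 1 (2^k))^2 := by ring
  calc ∑ j ∈ range (k + 1), (2:ℝ)^(2*j) * π 1 (2^j) * π 1 (2^k)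
      ≤ ∑ j ∈ range (k + 1), C' * ((2:ℝ)^j * (2:ℝ)^k) * (π 1 (2^k))^2 :=
        Finset.sum_le_sum key
    _ = C' * (2:ℝ)^k * (π 1 (2^k))^2 * ∑ j ∈ range (k + 1), (2:ℝ)^j := by
        rw [Finset.mul_sum]; exact Finset.sum_congr rfl fun j _ => by ring
    _ ≤ C' * (2:ℝ)^k * (π 1 (2^k))^2 * (2 * (2:ℝ)^k) := by
        refine mul_le_mul_of_nonneg_left ?_ (by positivity)
        rw [geom_sum_eq (by norm_num : (2:ℝ) ≠ 1)]
        rw [pow_succ]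
        have : (0:ℝ) < 2^k := by positivity
        norm_num
        linarith
    _ = 2 * C' * ((2:ℝ)^k * π 1 (2^k))^2 := by ring
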